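/- arXiv:2009.08872 — 2 statements merged into one kernel-verified Lean document; each statement's English description precedes it below -/
import Mathlib

section
/- (Theorem 1 of the paper.) If the offspring mean of the Galton–Watson branching process satisfies m < 1, then the process dies out eventually: almost surely there exists N such that X_n = 0 for all n ≥ N, and moreover E[X_n] → 0 as n → ∞. -/
open MeasureTheory ProbabilityTheory Filter
open scoped ENNReal

-- composite measurability
lemma gw_aux_meas_comp {Ω : Type*} {M : MeasurableSpace Ω} {f : Ω → ℕ} {g : ℕ → Ω → ℕ}
    (hf : Measurable[M] f) (hg : ∀ c, Measurable[M] (g c)) :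
    Measurable[M] fun ω => g (f ω) ω := by
  apply measurable_to_countable'
  intro j
  have h : (fun ω => g (f ω) ω) ⁻¹' {j} = ⋃ c, (f ⁻¹' {c}) ∩ (g c ⁻¹' {j}) := by
    ext ω
    simp only [Set.mem_preimage, Set.mem_singleton_iff, Set.mem_iUnion, Set.mem_inter_iff]
    exact ⟨fun h => ⟨f ω, rfl, h⟩, fun ⟨c, hc, h⟩ => hc ▸ h⟩
  rw [h]
  exact MeasurableSet.iUnion fun c =>
    (hf (measurableSet_singleton c)).inter (hg c (measurableSet_singleton j))

lemma gw_aux_lint_nat {Ω : Type*} [MeasurableSpace Ω] (μ : Measure Ω) {f : Ω → ℕ}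
    (hf : Measurable f) :
    ∫⁻ ω, (f ω : ℝ≥0∞) ∂μ = ∑' k : ℕ, k * μ (f ⁻¹' {k}) := by
  have h1 : ∫⁻ ω, (f ω : ℝ≥0∞) ∂μ = ∫⁻ n, (n : ℝ≥0∞) ∂(Measure.map f μ) :=
    (lintegral_map measurable_from_top hf).symm
  rw [h1, lintegral_countable']
  congr 1
  ext k
  rw [Measure.map_apply hf (measurableSet_singleton k)]


/-- (Theorem 1 of the paper.) If the offspring mean `m` of the Galton–Watson
branching process satisfies `m < 1`, then the process dies out eventually:
almost surely there is an `N` with `X n = 0` for all `n ≥ N`, and moreover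
`E[X n] → 0` as `n → ∞`. -/
theorem galtonWatson_dies_out_of_mean_lt_one
    {Ω : Type*} [MeasurableSpace Ω] (μ : Measure Ω) [IsProbabilityMeasure μ]
    (ξ : ℕ × ℕ → Ω → ℕ)
    (hmeas : ∀ p, Measurable (ξ p))
    (hindep : iIndepFun ξ μ)
    (hident : ∀ p, IdentDistrib (ξ p) (ξ (0, 0)) μ μ)
    (hint : Integrable (fun ω => (ξ (0, 0) ω : ℝ)) μ)
    (m : ℝ) (hm : m = ∫ ω, (ξ (0, 0) ω : ℝ) ∂μ)
    (X : ℕ → Ω → ℕ)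
    (hX0 : ∀ ω, X 0 ω = 1)
    (hXsucc : ∀ n ω, X (n + 1) ω = ∑ i ∈ Finset.range (X n ω), ξ (n, i) ω)
    (hmlt : m < 1) :
    (∀ᵐ ω ∂μ, ∃ N : ℕ, ∀ n ≥ N, X n ω = 0)
    ∧ Tendsto (fun n : ℕ => ∫ ω, (X n ω : ℝ) ∂μ) atTop (nhds 0) := by
  classical
  set ν : ℝ≥0∞ := ∫⁻ ω, (ξ (0, 0) ω : ℝ≥0∞) ∂μ with hν
  have hm0 : 0 ≤ m := hm ▸ integral_nonneg (fun ω => by positivity)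
  have hνm : ν = ENNReal.ofReal m := by
    rw [hν, hm, ofReal_integral_eq_lintegral_ofReal hint
      (Filter.Eventually.of_forall fun ω => by positivity)]
    simp [ENNReal.ofReal_natCast]
  -- sub-σ-algebras
  set mΩ' : ℕ × ℕ → MeasurableSpace Ω :=
    fun p => MeasurableSpace.comap (ξ p) inferInstance with hmΩ'
  have h_le : ∀ p, mΩ' p ≤ ‹MeasurableSpace Ω› := fun p =>
    measurable_iff_comap_le.1 (hmeas p)
  set MS : ℕ → MeasurableSpace Ω :=
    fun n => ⨆ p ∈ {q : ℕ × ℕ | q.1 < n}, mΩ' p with hMS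
  have hMSle : ∀ n, MS n ≤ ‹MeasurableSpace Ω› := fun n =>
    iSup₂_le fun p _ => h_le p
  have hξMS : ∀ n k i, k < n → Measurable[MS n] (ξ (k, i)) := by
    intro n k i hk
    exact (Measurable.of_comap_le le_rfl).mono
      (le_iSup₂ (f := fun p (_ : p ∈ {q : ℕ × ℕ | q.1 < n}) => mΩ' p) (k, i) hk) le_rfl
  have hXmeasMS : ∀ n k, k ≤ n → Measurable[MS n] (X k) := by
    intro n k hk
    induction k with
    | zero =>
      have : X 0 = fun _ => 1 := funext hX0
      rw [this]; exact measurable_const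
    | succ k ih =>
      have hk' : k < n := hk
      have hXk := ih (le_of_lt hk')
      have hXe : X (k + 1) = fun ω =>
          (fun c ω => ∑ i ∈ Finset.range c, ξ (k, i) ω) (X k ω) ω :=
        funext fun ω => hXsucc k ω
      rw [hXe]
      exact gw_aux_meas_comp hXk fun c =>
        Finset.measurable_sum _ fun i _ => hξMS n k i hk'
  have hXmeas : ∀ n, Measurable (X n) := fun n =>
    (hXmeasMS n n le_rfl).mono (hMSle n) le_rfl
  -- the key recursion
  have key : ∀ n, ∫⁻ ω, (X (n + 1) ω : ℝ≥0∞) ∂μ = ν * ∫⁻ ω, (X n ω : ℝ≥0∞) ∂μ := by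
    intro n
    have hξν : ∀ i, ∫⁻ ω, (ξ (n, i) ω : ℝ≥0∞) ∂μ = ν := fun i =>
      ((hident (n, i)).comp (measurable_from_top (f := fun k : ℕ => (k : ℝ≥0∞)))).lintegral_eq
    have hindA : ∀ i, Indep (MS n) (mΩ' (n, i)) μ := by
      intro i
      have hdisj : Disjoint {q : ℕ × ℕ | q.1 < n} ({(n, i)} : Set (ℕ × ℕ)) := by
        simp [Set.disjoint_singleton_right]
      have h := indep_iSup_of_disjoint h_le hindep hdisj
      simpa [hMS] using h
    have hA : ∀ k : ℕ, MeasurableSet[MS n] (X n ⁻¹' {k}) := fun k =>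
      hXmeasMS n n le_rfl (measurableSet_singleton k)
    have hAfull : ∀ k : ℕ, MeasurableSet (X n ⁻¹' {k}) := fun k =>
      hXmeas n (measurableSet_singleton k)
    have hpt : ∀ ω, (X (n + 1) ω : ℝ≥0∞)
        = ∑' k : ℕ, Set.indicator (X n ⁻¹' {k}) (fun _ => (1 : ℝ≥0∞)) ω
            * ∑ i ∈ Finset.range k, (ξ (n, i) ω : ℝ≥0∞) := by
      intro ω
      rw [tsum_eq_single (X n ω) (by
        intro k hk
        rw [Set.indicator_of_notMem (by simpa using (Ne.symm hk)), zero_mul])]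
      rw [Set.indicator_of_mem (by simp), one_mul, hXsucc n ω]
      push_cast
      rfl
    have hterm : ∀ k : ℕ, ∫⁻ ω, Set.indicator (X n ⁻¹' {k}) (fun _ => (1 : ℝ≥0∞)) ω
        * ∑ i ∈ Finset.range k, (ξ (n, i) ω : ℝ≥0∞) ∂μ
        = (k : ℝ≥0∞) * μ (X n ⁻¹' {k}) * ν := by
      intro k
      have hmul : ∀ i, ∫⁻ ω, Set.indicator (X n ⁻¹' {k}) (fun _ => (1 : ℝ≥0∞)) ω
          * (ξ (n, i) ω : ℝ≥0∞) ∂μ = μ (X n ⁻¹' {k}) * ν := by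
        intro i
        have hg : Measurable[mΩ' (n, i)] (fun ω => (ξ (n, i) ω : ℝ≥0∞)) :=
          (measurable_from_top).comp (Measurable.of_comap_le le_rfl)
        rw [lintegral_mul_eq_lintegral_mul_lintegral_of_independent_measurableSpace
          (hMSle n) (h_le (n, i)) (hindA i)
          (measurable_const.indicator (hA k)) hg,
          lintegral_indicator_const (hAfull k), one_mul, hξν i]
      calc ∫⁻ ω, Set.indicator (X n ⁻¹' {k}) (fun _ => (1 : ℝ≥0∞)) ω
            * ∑ i ∈ Finset.range k, (ξ (n, i) ω : ℝ≥0∞) ∂μ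
          = ∫⁻ ω, ∑ i ∈ Finset.range k,
              Set.indicator (X n ⁻¹' {k}) (fun _ => (1 : ℝ≥0∞)) ω
                * (ξ (n, i) ω : ℝ≥0∞) ∂μ := by
            simp_rw [Finset.mul_sum]
        _ = ∑ i ∈ Finset.range k, ∫⁻ ω, Set.indicator (X n ⁻¹' {k})
              (fun _ => (1 : ℝ≥0∞)) ω * (ξ (n, i) ω : ℝ≥0∞) ∂μ := by
            refine lintegral_finset_sum _ fun i _ => ?_
            exact (measurable_const.indicator (hAfull k)).mul
              ((measurable_from_top).comp (hmeas (n, i)))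
        _ = ∑ i ∈ Finset.range k, μ (X n ⁻¹' {k}) * ν := by
            exact Finset.sum_congr rfl fun i _ => hmul i
        _ = (k : ℝ≥0∞) * μ (X n ⁻¹' {k}) * ν := by
            rw [Finset.sum_const, Finset.card_range, nsmul_eq_mul, mul_assoc]
    calc ∫⁻ ω, (X (n + 1) ω : ℝ≥0∞) ∂μ
        = ∫⁻ ω, ∑' k : ℕ, Set.indicator (X n ⁻¹' {k}) (fun _ => (1 : ℝ≥0∞)) ω
            * ∑ i ∈ Finset.range k, (ξ (n, i) ω : ℝ≥0∞) ∂μ := lintegral_congr hpt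
      _ = ∑' k : ℕ, ∫⁻ ω, Set.indicator (X n ⁻¹' {k}) (fun _ => (1 : ℝ≥0∞)) ω
            * ∑ i ∈ Finset.range k, (ξ (n, i) ω : ℝ≥0∞) ∂μ := by
          refine lintegral_tsum fun k => ?_
          exact ((measurable_const.indicator (hAfull k)).mul
            (Finset.measurable_sum _ fun i _ =>
              (measurable_from_top).comp (hmeas (n, i)))).aemeasurable
      _ = ∑' k : ℕ, (k : ℝ≥0∞) * μ (X n ⁻¹' {k}) * ν := by
          exact tsum_congr hterm
      _ = (∑' k : ℕ, (k : ℝ≥0∞) * μ (X n ⁻¹' {k})) * ν := ENNReal.tsum_mul_right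
      _ = ν * ∫⁻ ω, (X n ω : ℝ≥0∞) ∂μ := by
          rw [gw_aux_lint_nat μ (hXmeas n), mul_comm]
  have hlint : ∀ n, ∫⁻ ω, (X n ω : ℝ≥0∞) ∂μ = ν ^ n := by
    intro n
    induction n with
    | zero => simp [hX0]
    | succ n ih => rw [key n, ih, pow_succ, mul_comm]
  -- zero is absorbing
  have hforward : ∀ ω N, X N ω = 0 → ∀ n, N ≤ n → X n ω = 0 := by
    intro ω N h0 n hn
    induction n with
    | zero => exact (Nat.le_zero.mp hn) ▸ h0
    | succ n ih =>
      rcases Nat.le_succ_iff.mp hn with h | h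
      · rw [hXsucc n ω, ih h]; simp
      · subst h; exact h0
  have hbad : ∀ n : ℕ, μ {ω | ¬ ∃ N : ℕ, ∀ k ≥ N, X k ω = 0} ≤ ν ^ n := by
    intro n
    have hsub : {ω | ¬ ∃ N : ℕ, ∀ k ≥ N, X k ω = 0}
        ⊆ {ω | 1 ≤ (X n ω : ℝ≥0∞)} := by
      intro ω hω
      have hne : X n ω ≠ 0 := by
        intro h0
        exact hω ⟨n, fun k hk => hforward ω n h0 k hk⟩
      have : 1 ≤ X n ω := Nat.one_le_iff_ne_zero.mpr hne
      simpa using (Nat.one_le_cast (α := ℝ≥0∞)).mpr this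
    calc μ {ω | ¬ ∃ N : ℕ, ∀ k ≥ N, X k ω = 0}
        ≤ μ {ω | 1 ≤ (X n ω : ℝ≥0∞)} := measure_mono hsub
      _ = 1 * μ {ω | 1 ≤ (X n ω : ℝ≥0∞)} := (one_mul _).symm
      _ ≤ ∫⁻ ω, (X n ω : ℝ≥0∞) ∂μ :=
          mul_meas_ge_le_lintegral₀
            ((measurable_from_top).comp (hXmeas n)).aemeasurable 1
      _ = ν ^ n := hlint n
  have hν1 : ν < 1 := by rw [hνm]; exact ENNReal.ofReal_lt_one.mpr hmlt
  have htend : Tendsto (fun n : ℕ => ν ^ n) atTop (nhds 0) :=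
    ENNReal.tendsto_pow_atTop_nhds_zero_of_lt_one hν1
  have hμ0 : μ {ω | ¬ ∃ N : ℕ, ∀ k ≥ N, X k ω = 0} = 0 :=
    le_antisymm (ge_of_tendsto' htend hbad) (zero_le)
  constructor
  · rw [ae_iff]; exact hμ0
  · have hint' : ∀ n, ∫ ω, (X n ω : ℝ) ∂μ = m ^ n := by
      intro n
      have hsm : AEStronglyMeasurable (fun ω => (X n ω : ℝ)) μ :=
        (Measurable.aestronglyMeasurable
          ((measurable_from_top (f := fun k : ℕ => (k : ℝ))).comp (hXmeas n)))
      rw [integral_eq_lintegral_of_nonneg_ae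
        (Filter.Eventually.of_forall fun ω => by positivity) hsm]
      simp_rw [ENNReal.ofReal_natCast]
      rw [hlint n, hνm, ← ENNReal.ofReal_pow hm0,
        ENNReal.toReal_ofReal (pow_nonneg hm0 n)]
    simp_rw [hint']
    exact tendsto_pow_atTop_nhds_zero_of_lt_one (by linarith) hmlt
end

section
/- Let m(g,d,t,T_p) = 0.6·μ_s + 0.4·μ_a denote the effective reproduction number of the (g,d,t) schedule with daily per-contact transmission probability T_p. For T_p = 0.1, the schedules (1,5,2) and (2,5,0) satisfy m > 1 (values 6.164 and 2.278 respectively), so that the expected generation sizes E[X_n] = m^n of the associated Galton–Watson branching process grow without bound; whereas the schedules (3,3,0) and (4,4,0) satisfy m < 1 (values 0.804 and 0.67 respectively), so that E[X_n] → 0 and the associated process dies out almost surely. -/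
/-- `d' = max(0, min(d-2, 5))`: initial scheduled infectious days of a symptomatic
individual under the `(g,d,t)` mechanism. -/
noncomputable def dPrime (d : ℕ) : ℝ := max 0 (min ((d : ℝ) - 2) 5)

/-- `d'_i = max(0, min(5 - (g*d+t)*i, d))`. -/
noncomputable def dPrimeI (g d t i : ℕ) : ℝ :=
  max 0 (min (5 - ((g : ℝ) * d + t) * i) (d : ℝ))

/-- Symptomatic reproductive rate `μ_s = T_p * D^g_s * (13.4 / g)` of the `(g,d,t)`
mechanism, where `D^g_s = d' + Σ_{i=1}^∞ d'_i`. -/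
noncomputable def muS (g d t : ℕ) (Tp : ℝ) : ℝ :=
  Tp * (dPrime d + ∑' i : ℕ, dPrimeI g d t (i + 1)) * (13.4 / g)

/-- `d'' = max(0, min(d-2, 11))`: initial scheduled infectious days of an asymptomatic
individual under the `(g,d,t)` mechanism. -/
noncomputable def dDPrime (d : ℕ) : ℝ := max 0 (min ((d : ℝ) - 2) 11)

/-- `d''_i = max(0, min(11 - (g*d+t)*i, d))`. -/
noncomputable def dDPrimeI (g d t i : ℕ) : ℝ :=
  max 0 (min (11 - ((g : ℝ) * d + t) * i) (d : ℝ))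

/-- Asymptomatic reproductive rate `μ_a = T_p * D^g_a * (13.4 / g)` of the `(g,d,t)`
mechanism, where `D^g_a = d'' + Σ_{i=1}^∞ d''_i`. -/
noncomputable def muA (g d t : ℕ) (Tp : ℝ) : ℝ :=
  Tp * (dDPrime d + ∑' i : ℕ, dDPrimeI g d t (i + 1)) * (13.4 / g)

/-- Effective reproduction number `m(g,d,t,T_p) = 0.6 μ_s + 0.4 μ_a` of the
`(g,d,t)` schedule with daily per-contact transmission probability `T_p`. -/
noncomputable def effR (g d t : ℕ) (Tp : ℝ) : ℝ :=
  0.6 * muS g d t Tp + 0.4 * muA g d t Tp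

lemma dPrimeI_eq_zero {g d t i : ℕ} (h : (5:ℝ) ≤ ((g : ℝ) * d + t) * i) :
    dPrimeI g d t i = 0 := by
  unfold dPrimeI
  rw [max_eq_left]
  exact le_trans (min_le_left _ _) (by linarith)

lemma dDPrimeI_eq_zero {g d t i : ℕ} (h : (11:ℝ) ≤ ((g : ℝ) * d + t) * i) :
    dDPrimeI g d t i = 0 := by
  unfold dDPrimeI
  rw [max_eq_left]
  exact le_trans (min_le_left _ _) (by linarith)

lemma effR_152 : effR 1 5 2 0.1 = 6.164 := by
  have h1 : (∑' i : ℕ, dPrimeI 1 5 2 (i + 1)) = 0 := by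
    have : ∀ i : ℕ, dPrimeI 1 5 2 (i + 1) = 0 := fun i => dPrimeI_eq_zero (by
      have : (0:ℝ) ≤ (i:ℝ) := Nat.cast_nonneg i
      push_cast; nlinarith)
    rw [tsum_congr this, tsum_zero]
  have h2 : (∑' i : ℕ, dDPrimeI 1 5 2 (i + 1)) = 4 := by
    rw [tsum_eq_sum (s := {0}) (fun i hi => dDPrimeI_eq_zero (by
      have h1i : (1:ℝ) ≤ (i:ℝ) := by
        exact_mod_cast Nat.one_le_iff_ne_zero.2 (by simpa using hi)
      push_cast; nlinarith))]
    simp [dDPrimeI]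
    norm_num
  unfold effR muS muA
  rw [h1, h2]
  norm_num [dPrime, dDPrime]

lemma effR_250 : effR 2 5 0 0.1 = 2.278 := by
  have h1 : (∑' i : ℕ, dPrimeI 2 5 0 (i + 1)) = 0 := by
    have : ∀ i : ℕ, dPrimeI 2 5 0 (i + 1) = 0 := fun i => dPrimeI_eq_zero (by
      have : (0:ℝ) ≤ (i:ℝ) := Nat.cast_nonneg i
      push_cast; nlinarith)
    rw [tsum_congr this, tsum_zero]
  have h2 : (∑' i : ℕ, dDPrimeI 2 5 0 (i + 1)) = 1 := by
    rw [tsum_eq_sum (s := {0}) (fun i hi => dDPrimeI_eq_zero (by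
      have h1i : (1:ℝ) ≤ (i:ℝ) := by
        exact_mod_cast Nat.one_le_iff_ne_zero.2 (by simpa using hi)
      push_cast; nlinarith))]
    simp [dDPrimeI]
    norm_num
  unfold effR muS muA
  rw [h1, h2]
  norm_num [dPrime, dDPrime]

lemma effR_330 : effR 3 3 0 0.1 = 0.804 := by
  have h1 : (∑' i : ℕ, dPrimeI 3 3 0 (i + 1)) = 0 := by
    have : ∀ i : ℕ, dPrimeI 3 3 0 (i + 1) = 0 := fun i => dPrimeI_eq_zero (by
      have : (0:ℝ) ≤ (i:ℝ) := Nat.cast_nonneg i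
      push_cast; nlinarith)
    rw [tsum_congr this, tsum_zero]
  have h2 : (∑' i : ℕ, dDPrimeI 3 3 0 (i + 1)) = 2 := by
    rw [tsum_eq_sum (s := {0}) (fun i hi => dDPrimeI_eq_zero (by
      have h1i : (1:ℝ) ≤ (i:ℝ) := by
        exact_mod_cast Nat.one_le_iff_ne_zero.2 (by simpa using hi)
      push_cast; nlinarith))]
    simp [dDPrimeI]
    norm_num
  unfold effR muS muA
  rw [h1, h2]
  norm_num [dPrime, dDPrime]

lemma effR_440 : effR 4 4 0 0.1 = 0.67 := by
  have h1 : (∑' i : ℕ, dPrimeI 4 4 0 (i + 1)) = 0 := by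
    have : ∀ i : ℕ, dPrimeI 4 4 0 (i + 1) = 0 := fun i => dPrimeI_eq_zero (by
      have : (0:ℝ) ≤ (i:ℝ) := Nat.cast_nonneg i
      push_cast; nlinarith)
    rw [tsum_congr this, tsum_zero]
  have h2 : (∑' i : ℕ, dDPrimeI 4 4 0 (i + 1)) = 0 := by
    have : ∀ i : ℕ, dDPrimeI 4 4 0 (i + 1) = 0 := fun i => dDPrimeI_eq_zero (by
      have : (0:ℝ) ≤ (i:ℝ) := Nat.cast_nonneg i
      push_cast; nlinarith)
    rw [tsum_congr this, tsum_zero]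
  unfold effR muS muA
  rw [h1, h2]
  norm_num [dPrime, dDPrime]


open MeasureTheory ProbabilityTheory Filter
open scoped ENNReal in
theorem gw_main {Ω : Type*} [MeasurableSpace Ω] (μ : Measure Ω) [IsProbabilityMeasure μ]
    (ξ : ℕ × ℕ → Ω → ℕ)
    (hmeas : ∀ p, Measurable (ξ p))
    (hindep : iIndepFun ξ μ)
    (hident : ∀ p, IdentDistrib (ξ p) (ξ (0, 0)) μ μ)
    (hint : Integrable (fun ω => (ξ (0, 0) ω : ℝ)) μ)
    {r : ℝ} (hr : 0 ≤ r)
    (hmean : ∫ ω, (ξ (0, 0) ω : ℝ) ∂μ = r)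
    (X : ℕ → Ω → ℕ)
    (hX0 : ∀ ω, X 0 ω = 1)
    (hXsucc : ∀ n ω, X (n + 1) ω = ∑ i ∈ Finset.range (X n ω), ξ (n, i) ω) :
    (∀ n : ℕ, ∫ ω, (X n ω : ℝ) ∂μ = r ^ n)
    ∧ (r < 1 → ∀ᵐ ω ∂μ, ∃ N : ℕ, ∀ n ≥ N, X n ω = 0) := by
  set M : ℕ → MeasurableSpace Ω :=
    fun n => ⨆ p ∈ {q : ℕ × ℕ | q.1 < n}, MeasurableSpace.comap (ξ p) inferInstance with hM
  have hM_le : ∀ n, M n ≤ ‹MeasurableSpace Ω› :=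
    fun n => iSup₂_le fun p _ => (hmeas p).comap_le
  have hM_mono : ∀ n, M n ≤ M (n + 1) :=
    fun n => biSup_mono fun p hp => Nat.lt_succ_of_lt hp
  have hcomap_le : ∀ n i, MeasurableSpace.comap (ξ (n, i)) inferInstance ≤ M (n + 1) :=
    fun n i => le_iSup₂ (f := fun (p : ℕ × ℕ) (_ : p ∈ {q : ℕ × ℕ | q.1 < n + 1}) =>
      MeasurableSpace.comap (ξ p) inferInstance) (n, i) (Nat.lt_succ_self n)
  -- measurability of X n w.r.t. M n
  have hXM : ∀ n, Measurable[M n] (X n) := by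
    intro n
    induction n with
    | zero =>
      have : X 0 = fun _ => 1 := funext hX0
      rw [this]; exact measurable_const
    | succ n ih =>
      refine @measurable_to_countable' ℕ Ω _ _ (M (n + 1)) (X (n + 1)) fun j => ?_
      have hset : X (n + 1) ⁻¹' {j} =
          ⋃ k, ({ω | X n ω = k} ∩ {ω | ∑ i ∈ Finset.range k, ξ (n, i) ω = j}) := by
        ext ω
        simp only [Set.mem_preimage, Set.mem_singleton_iff, Set.mem_iUnion, Set.mem_inter_iff,
          Set.mem_setOf_eq, hXsucc n ω]
        exact ⟨fun h => ⟨X n ω, rfl, h⟩, fun ⟨k, hk, h⟩ => hk ▸ h⟩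
      rw [hset]
      refine MeasurableSet.iUnion fun k => MeasurableSet.inter ?_ ?_
      · exact hM_mono n _ (ih (MeasurableSet.of_discrete (s := {k})))
      · have hsum : Measurable[M (n + 1)] (fun ω => ∑ i ∈ Finset.range k, ξ (n, i) ω) :=
          Finset.measurable_sum _ fun i _ =>
            (Measurable.of_comap_le le_rfl).mono (hcomap_le n i) le_rfl
        exact hsum (MeasurableSet.of_discrete (s := {j}))
  have hXmeas : ∀ n, Measurable (X n) := fun n => (hXM n).mono (hM_le n) le_rfl
  -- independence
  have hindep' : ∀ n i,
      Indep (M n) (MeasurableSpace.comap (ξ (n, i)) inferInstance) μ := by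
    intro n i
    have h := indep_iSup_of_disjoint (m := fun p => MeasurableSpace.comap (ξ p) inferInstance)
      (fun p => (hmeas p).comap_le) hindep.iIndep
      (S := {q : ℕ × ℕ | q.1 < n}) (T := {(n, i)})
      (by simp [Set.disjoint_singleton_right])
    simpa [iSup_singleton, hM] using h
  set mb : ℝ≥0∞ := ∫⁻ ω, (ξ (0, 0) ω : ℝ≥0∞) ∂μ with hmb
  have hξlint : ∀ p, ∫⁻ ω, (ξ p ω : ℝ≥0∞) ∂μ = mb :=
    fun p => ((hident p).comp (Measurable.of_discrete (f := ((↑) : ℕ → ℝ≥0∞)))).lintegral_eq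
  -- indicator lintegral
  have hite_meas : ∀ n i, Measurable (fun ω => if i < X n ω then (1 : ℝ≥0∞) else 0) :=
    fun n i => Measurable.comp (Measurable.of_discrete (f := fun k => if i < k then (1:ℝ≥0∞) else 0)) (hXmeas n)
  have hsetmeas : ∀ n i, MeasurableSet {ω | i < X n ω} :=
    fun n i => hXmeas n (MeasurableSet.of_discrete (s := {k | i < k}))
  have hlint_ite : ∀ n i,
      ∫⁻ ω, (if i < X n ω then (1 : ℝ≥0∞) else 0) ∂μ = μ {ω | i < X n ω} := by
    intro n i
    rw [show (fun ω => if i < X n ω then (1 : ℝ≥0∞) else 0)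
        = Set.indicator {ω | i < X n ω} (fun _ => 1) from by
      ext ω; simp [Set.indicator_apply, Set.mem_setOf_eq]]
    exact lintegral_indicator_one (hsetmeas n i)
  -- pointwise nat identity
  have hnat : ∀ k : ℕ, (∑' i : ℕ, (if i < k then (1 : ℝ≥0∞) else 0)) = k := by
    intro k
    rw [tsum_eq_sum (s := Finset.range k)
      (fun i hi => if_neg (by simpa using Finset.mem_range.not.1 hi))]
    rw [Finset.sum_congr rfl fun i hi => if_pos (Finset.mem_range.1 hi)]
    simp
  -- layer cake
  have hlayer : ∀ n, ∫⁻ ω, (X n ω : ℝ≥0∞) ∂μ = ∑' i : ℕ, μ {ω | i < X n ω} := by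
    intro n
    rw [lintegral_congr (fun ω => (hnat (X n ω)).symm),
      lintegral_tsum fun i => (hite_meas n i).aemeasurable]
    exact tsum_congr fun i => hlint_ite n i
  -- product rule
  have hmul : ∀ n i,
      ∫⁻ ω, (if i < X n ω then (1 : ℝ≥0∞) else 0) * (ξ (n, i) ω : ℝ≥0∞) ∂μ
        = μ {ω | i < X n ω} * mb := by
    intro n i
    have h := lintegral_mul_eq_lintegral_mul_lintegral_of_independent_measurableSpace
      (hM_le n) ((hmeas (n, i)).comap_le) (hindep' n i)
      (show Measurable[M n] (fun ω => if i < X n ω then (1 : ℝ≥0∞) else 0) from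
        Measurable.comp (Measurable.of_discrete (f := fun k => if i < k then (1:ℝ≥0∞) else 0))
          (hXM n))
      (show Measurable[MeasurableSpace.comap (ξ (n, i)) inferInstance]
          (fun ω => (ξ (n, i) ω : ℝ≥0∞)) from
        Measurable.comp (Measurable.of_discrete (f := ((↑) : ℕ → ℝ≥0∞)))
          (Measurable.of_comap_le le_rfl))
    rw [h, hlint_ite n i, hξlint (n, i)]
  -- recursion for lintegrals
  have hrec : ∀ n, ∫⁻ ω, (X (n + 1) ω : ℝ≥0∞) ∂μ = (∫⁻ ω, (X n ω : ℝ≥0∞) ∂μ) * mb := by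
    intro n
    have hpt : ∀ ω, (X (n + 1) ω : ℝ≥0∞)
        = ∑' i : ℕ, (if i < X n ω then (1 : ℝ≥0∞) else 0) * (ξ (n, i) ω : ℝ≥0∞) := by
      intro ω
      rw [hXsucc n ω, Nat.cast_sum,
        tsum_eq_sum (s := Finset.range (X n ω))
          (fun i hi => by rw [if_neg (by simpa using Finset.mem_range.not.1 hi), zero_mul])]
      exact (Finset.sum_congr rfl fun i hi => by
        rw [if_pos (Finset.mem_range.1 hi), one_mul]).symm
    rw [lintegral_congr hpt,
      lintegral_tsum fun i =>
        (show Measurable (fun ω => (if i < X n ω then (1 : ℝ≥0∞) else 0) * (ξ (n, i) ω : ℝ≥0∞)) from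
          (hite_meas n i).mul
            (Measurable.comp (Measurable.of_discrete (f := ((↑) : ℕ → ℝ≥0∞))) (hmeas (n, i)))).aemeasurable]
    rw [tsum_congr fun i => hmul n i, ENNReal.tsum_mul_right, ← hlayer n]
  -- closed form
  have hpow : ∀ n, ∫⁻ ω, (X n ω : ℝ≥0∞) ∂μ = mb ^ n := by
    intro n
    induction n with
    | zero => simp [hX0]
    | succ n ih => rw [hrec n, ih, pow_succ]
  -- identify mb
  have hmb_eq : mb = ENNReal.ofReal r := by
    rw [hmb, ← hmean, ofReal_integral_eq_lintegral_ofReal hint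
      (ae_of_all _ fun ω => Nat.cast_nonneg _)]
    exact lintegral_congr fun ω => (ENNReal.ofReal_natCast _).symm
  -- real integrals
  have hintX : ∀ n, ∫ ω, (X n ω : ℝ) ∂μ = r ^ n := by
    intro n
    rw [integral_eq_lintegral_of_nonneg_ae (ae_of_all _ fun ω => Nat.cast_nonneg _)
      ((show Measurable (fun ω => (X n ω : ℝ)) from
        Measurable.comp (Measurable.of_discrete (f := ((↑) : ℕ → ℝ))) (hXmeas n)).aestronglyMeasurable)]
    simp only [ENNReal.ofReal_natCast]
    rw [hpow n, hmb_eq, ← ENNReal.ofReal_pow hr, ENNReal.toReal_ofReal (pow_nonneg hr n)]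
  refine ⟨hintX, fun hlt => ?_⟩
  -- extinction
  have hstay : ∀ ω n m, n ≤ m → X n ω = 0 → X m ω = 0 := by
    intro ω n m hnm h0
    induction m, hnm using Nat.le_induction with
    | base => exact h0
    | succ m hm ih => rw [hXsucc m ω, ih]; simp
  have hA : μ {ω | ∀ n, X n ω ≠ 0} = 0 := by
    have hle : ∀ n, μ {ω | ∀ n, X n ω ≠ 0} ≤ mb ^ n := by
      intro n
      rw [← hpow n]
      refine meas_le_lintegral₀
        (show Measurable (fun ω => (X n ω : ℝ≥0∞)) from
          Measurable.comp (Measurable.of_discrete (f := ((↑) : ℕ → ℝ≥0∞))) (hXmeas n)).aemeasurable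
        fun ω hω => ?_
      exact_mod_cast Nat.one_le_iff_ne_zero.2 (hω n)
    have h0 : Tendsto (fun n : ℕ => mb ^ n) atTop (nhds 0) :=
      ENNReal.tendsto_pow_atTop_nhds_zero_of_lt_one
        (by rw [hmb_eq]; exact ENNReal.ofReal_lt_one.2 hlt)
    exact le_antisymm (ge_of_tendsto' h0 hle) zero_le
  have hae := (MeasureTheory.measure_eq_zero_iff_ae_notMem (μ := μ)).1 hA
  filter_upwards [hae] with ω hω
  push_neg at hω
  obtain ⟨N, hN⟩ := hω
  exact ⟨N, fun m hm => hstay ω N m hm hN⟩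


open MeasureTheory ProbabilityTheory Filter

/-- For `T_p = 0.1`, the schedules (1,5,2) and (2,5,0) have effective reproduction
number `m > 1` (values 6.164 and 2.278), so the expected generation sizes
`E[X n] = m ^ n` of the associated Galton–Watson process grow without bound;
whereas (3,3,0) and (4,4,0) have `m < 1` (values 0.804 and 0.67), so `E[X n] → 0`
and the associated process dies out almost surely. -/
theorem schedules_dichotomy_at_high_Tp
    (g d t : ℕ)
    {Ω : Type*} [MeasurableSpace Ω] (μ : Measure Ω) [IsProbabilityMeasure μ]
    (ξ : ℕ × ℕ → Ω → ℕ)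
    (hmeas : ∀ p, Measurable (ξ p))
    (hindep : iIndepFun ξ μ)
    (hident : ∀ p, IdentDistrib (ξ p) (ξ (0, 0)) μ μ)
    (hint : Integrable (fun ω => (ξ (0, 0) ω : ℝ)) μ)
    (hmean : ∫ ω, (ξ (0, 0) ω : ℝ) ∂μ = effR g d t 0.1)
    (X : ℕ → Ω → ℕ)
    (hX0 : ∀ ω, X 0 ω = 1)
    (hXsucc : ∀ n ω, X (n + 1) ω = ∑ i ∈ Finset.range (X n ω), ξ (n, i) ω) :
    (((g, d, t) = (1, 5, 2) ∨ (g, d, t) = (2, 5, 0)) →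
      1 < effR g d t 0.1
      ∧ ((g, d, t) = (1, 5, 2) → effR g d t 0.1 = 6.164)
      ∧ ((g, d, t) = (2, 5, 0) → effR g d t 0.1 = 2.278)
      ∧ (∀ n : ℕ, ∫ ω, (X n ω : ℝ) ∂μ = (effR g d t 0.1) ^ n)
      ∧ Tendsto (fun n : ℕ => ∫ ω, (X n ω : ℝ) ∂μ) atTop atTop)
    ∧ (((g, d, t) = (3, 3, 0) ∨ (g, d, t) = (4, 4, 0)) →
      effR g d t 0.1 < 1
      ∧ ((g, d, t) = (3, 3, 0) → effR g d t 0.1 = 0.804)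
      ∧ ((g, d, t) = (4, 4, 0) → effR g d t 0.1 = 0.67)
      ∧ Tendsto (fun n : ℕ => ∫ ω, (X n ω : ℝ) ∂μ) atTop (nhds 0)
      ∧ (∀ᵐ ω ∂μ, ∃ N : ℕ, ∀ n ≥ N, X n ω = 0)) := by

  have hmain : ∀ (hr : 0 ≤ effR g d t 0.1),
      (∀ n : ℕ, ∫ ω, (X n ω : ℝ) ∂μ = (effR g d t 0.1) ^ n)
      ∧ (effR g d t 0.1 < 1 → ∀ᵐ ω ∂μ, ∃ N : ℕ, ∀ n ≥ N, X n ω = 0) :=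
    fun hr => gw_main μ ξ hmeas hindep hident hint hr hmean X hX0 hXsucc
  constructor
  · rintro (h | h) <;>
      (simp only [Prod.mk.injEq] at h; obtain ⟨hg, hd, ht⟩ := h; subst hg; subst hd; subst ht)
    · have hval : effR 1 5 2 0.1 = 6.164 := effR_152
      have hr : (0:ℝ) ≤ effR 1 5 2 0.1 := by rw [hval]; norm_num
      obtain ⟨hint', _⟩ := hmain hr
      refine ⟨by rw [hval]; norm_num, fun _ => hval, by intro hc; exact absurd hc (by decide),
        hint', ?_⟩
      have hfe : (fun n : ℕ => ∫ ω, (X n ω : ℝ) ∂μ) = fun n : ℕ => (6.164 : ℝ) ^ n := by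
        funext n; rw [hint' n, hval]
      rw [hfe]
      exact tendsto_pow_atTop_atTop_of_one_lt (by norm_num)
    · have hval : effR 2 5 0 0.1 = 2.278 := effR_250
      have hr : (0:ℝ) ≤ effR 2 5 0 0.1 := by rw [hval]; norm_num
      obtain ⟨hint', _⟩ := hmain hr
      refine ⟨by rw [hval]; norm_num, by intro hc; exact absurd hc (by decide), fun _ => hval,
        hint', ?_⟩
      have hfe : (fun n : ℕ => ∫ ω, (X n ω : ℝ) ∂μ) = fun n : ℕ => (2.278 : ℝ) ^ n := by
        funext n; rw [hint' n, hval]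
      rw [hfe]
      exact tendsto_pow_atTop_atTop_of_one_lt (by norm_num)
  · rintro (h | h) <;>
      (simp only [Prod.mk.injEq] at h; obtain ⟨hg, hd, ht⟩ := h; subst hg; subst hd; subst ht)
    · have hval : effR 3 3 0 0.1 = 0.804 := effR_330
      have hr : (0:ℝ) ≤ effR 3 3 0 0.1 := by rw [hval]; norm_num
      obtain ⟨hint', hext⟩ := hmain hr
      refine ⟨by rw [hval]; norm_num, fun _ => hval, by intro hc; exact absurd hc (by decide),
        ?_, hext (by rw [hval]; norm_num)⟩
      have hfe : (fun n : ℕ => ∫ ω, (X n ω : ℝ) ∂μ) = fun n : ℕ => (0.804 : ℝ) ^ n := by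
        funext n; rw [hint' n, hval]
      rw [hfe]
      exact tendsto_pow_atTop_nhds_zero_of_lt_one (by norm_num) (by norm_num)
    · have hval : effR 4 4 0 0.1 = 0.67 := effR_440
      have hr : (0:ℝ) ≤ effR 4 4 0 0.1 := by rw [hval]; norm_num
      obtain ⟨hint', hext⟩ := hmain hr
      refine ⟨by rw [hval]; norm_num, by intro hc; exact absurd hc (by decide), fun _ => hval,
        ?_, hext (by rw [hval]; norm_num)⟩
      have hfe : (fun n : ℕ => ∫ ω, (X n ω : ℝ) ∂μ) = fun n : ℕ => (0.67 : ℝ) ^ n := by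
        funext n; rw [hint' n, hval]
      rw [hfe]
      exact tendsto_pow_atTop_nhds_zero_of_lt_one (by norm_num) (by norm_num)
end
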